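/- Let k be a field of characteristic different from 2 and 3, and let f = x⁴ + g₃x + g₄ ∈ k[x] be squarefree with g₃ ≠ 0 and g₄ ≠ 0 (so g₂ = 0). Set j₃ = g₄³/g₃⁴ (so j₃ ≠ 0). Then the polynomial x⁴ + j₃²x + j₃³ is squarefree, and the normal-form Picard curve y³ = x⁴ + j₃²x + j₃³ has invariant triple (0, 0, j₃), the same as y³ = f(x); explicitly, with t = g₃³/g₄² one has f(tX) = t⁴·(X⁴ + j₃²X + j₃³). -/

import Mathlib

open Polynomial

lemma squarefree_comp_linear {k : Type*} [Field k] {p : k[X]} (hp : Squarefree p)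
    (t : k) (ht : t ≠ 0) : Squarefree (p.comp (C t * X)) := by
  intro x hx
  have key : ∀ q : k[X], (q.comp (C t * X)).comp (C t⁻¹ * X) = q := by
    intro q
    rw [comp_assoc]
    simp only [mul_comp, C_comp, X_comp]
    rw [← mul_assoc, ← C_mul, mul_inv_cancel₀ ht, C_1, one_mul, comp_X]
  set y := x.comp (C t⁻¹ * X) with hy
  have hyy : y * y ∣ p := by
    obtain ⟨c, hc⟩ := hx
    have : y * y ∣ (p.comp (C t * X)).comp (C t⁻¹ * X) := by
      rw [hc]
      exact ⟨c.comp (C t⁻¹ * X), by simp [mul_comp, hy]⟩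
    rwa [key p] at this
  have hyu : IsUnit y := hp y hyy
  obtain ⟨r, hr, hrc⟩ := Polynomial.isUnit_iff.mp hyu
  have hxeq : x = C r := by
    have : y.comp (C t * X) = x := by
      have k2 : ∀ q : k[X], (q.comp (C t⁻¹ * X)).comp (C t * X) = q := by
        intro q
        rw [comp_assoc]
        simp only [mul_comp, C_comp, X_comp]
        rw [← mul_assoc, ← C_mul, inv_mul_cancel₀ ht, C_1, one_mul, comp_X]
      exact k2 x
    rw [← this, ← hrc, C_comp]
  rw [hxeq]
  exact hr.map C

/-- (Case 2, `j₁ = 0`, `j₃ ≠ 0`.)  If `f = x⁴ + g₃x + g₄` is squarefree with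
`g₃ ≠ 0` and `g₄ ≠ 0`, then the model `y³ = x⁴ + j₃²x + j₃³` is a normal-form Picard curve
with invariant triple `(0, 0, j₃)`, obtained from `f` by the scaling `t = g₃³ / g₄²`. -/
theorem picard_model_case_two
    {k : Type*} [Field k] (hchar2 : ringChar k ≠ 2) (hchar3 : ringChar k ≠ 3)
    (g₃ g₄ : k) (hg₃ : g₃ ≠ 0) (hg₄ : g₄ ≠ 0)
    (hsf : Squarefree (X ^ 4 + C g₃ * X + C g₄ : k[X]))
    (j₃ t : k) (hj₃ : j₃ = g₄ ^ 3 / g₃ ^ 4) (ht : t = g₃ ^ 3 / g₄ ^ 2) :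
    j₃ ≠ 0
    ∧ Squarefree (X ^ 4 + C (j₃ ^ 2) * X + C (j₃ ^ 3) : k[X])
    ∧ (0 : k) ^ 3 / (j₃ ^ 2) ^ 2 = 0
    ∧ (0 : k) * j₃ ^ 3 / (j₃ ^ 2) ^ 2 = 0
    ∧ (j₃ ^ 3) ^ 3 / (j₃ ^ 2) ^ 4 = j₃
    ∧ (0 : k) ^ 3 / g₃ ^ 2 = 0
    ∧ (0 : k) * g₄ / g₃ ^ 2 = 0
    ∧ (X ^ 4 + C g₃ * X + C g₄ : k[X]).comp (C t * X) =
        C (t ^ 4) * (X ^ 4 + C (j₃ ^ 2) * X + C (j₃ ^ 3)) := by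
  have hj : j₃ ≠ 0 := by
    rw [hj₃]
    exact div_ne_zero (pow_ne_zero _ hg₄) (pow_ne_zero _ hg₃)
  have htne : t ≠ 0 := by
    rw [ht]
    exact div_ne_zero (pow_ne_zero _ hg₃) (pow_ne_zero _ hg₄)
  have h1 : g₃ * t = t ^ 4 * j₃ ^ 2 := by
    subst hj₃ ht; field_simp
  have h2 : g₄ = t ^ 4 * j₃ ^ 3 := by
    subst hj₃ ht; field_simp
  have hcomp : (X ^ 4 + C g₃ * X + C g₄ : k[X]).comp (C t * X) =
      C (t ^ 4) * (X ^ 4 + C (j₃ ^ 2) * X + C (j₃ ^ 3)) := by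
    have : (X ^ 4 + C g₃ * X + C g₄ : k[X]).comp (C t * X) =
        C (t ^ 4) * X ^ 4 + C (g₃ * t) * X + C g₄ := by
      simp only [add_comp, mul_comp, pow_comp, X_comp, C_comp, mul_pow, ← C_pow, C_mul]
      ring
    rw [this, h1, h2]
    simp only [C_mul, C_pow]
    ring
  refine ⟨hj, ?_, by simp, by simp, ?_, by simp, by simp, hcomp⟩
  · have hsfc := squarefree_comp_linear hsf t htne
    rw [hcomp] at hsfc
    exact hsfc.squarefree_of_dvd (dvd_mul_left _ _)
  · field_simp
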